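/- (Uniform limit of compact operators solving a linear Volterra equation is compact — abstract version.) Let H be a Hilbert space and G : (0,a] → L(H) a map such that for every sequence (g_n) in the closed unit ball of H there is a subsequence (g_{n'}) with: (i) lim sup_{n',m'→∞} |G_t(g_{n'}) − G_t(g_{m'})| =: l(t) satisfies l(t) ≤ B ∫₀^t l(s)/s^{κ} ds for all t ∈ (0,a], where 0 ≤ κ < 1, and (ii) l is bounded on (0,a]. Then l(t) = 0 for all t ∈ (0,a]; i.e., (G_t(g_{n'})) is Cauchy in H for each t, and hence G_t is a compact operator for each t ∈ (0,a]. -/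

import Mathlib

open MeasureTheory intervalIntegral Set Filter


open scoped Topology

/-- The double limsup `l(t) = limsup_{n,m→∞} ‖G_t(g_{φ(n)}) − G_t(g_{φ(m)})‖`. -/
noncomputable def lsup {H : Type*} [NormedAddCommGroup H] [NormedSpace ℝ H]
    (G : ℝ → H →L[ℝ] H) (g : ℕ → H) (φ : ℕ → ℕ) (t : ℝ) : ℝ :=
  Filter.limsup (fun p : ℕ × ℕ => ‖G t (g (φ p.1)) - G t (g (φ p.2))‖)
    (Filter.atTop ×ˢ Filter.atTop)


lemma gronwall19 {a B κ : ℝ} (ha : 0 < a) (hB : 0 ≤ B) (hκ0 : 0 ≤ κ) (hκ1 : κ < 1)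
    {l : ℝ → ℝ} (hl0 : ∀ t ∈ Set.Ioc (0:ℝ) a, 0 ≤ l t)
    {M : ℝ} (hM : ∀ t ∈ Set.Ioc (0:ℝ) a, l t ≤ M)
    (hineq : ∀ t ∈ Set.Ioc (0:ℝ) a, l t ≤ B * ∫ s in (0:ℝ)..t, l s / s ^ κ) :
    ∀ t ∈ Set.Ioc (0:ℝ) a, l t = 0 := by
  have h1κ : 0 < 1 - κ := by linarith
  set M' := max M 0 with hM'
  have hM'0 : 0 ≤ M' := le_max_right _ _
  have key : ∀ n : ℕ, ∀ t ∈ Set.Ioc (0:ℝ) a,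
      l t ≤ M' * B ^ n / ((1 - κ) ^ n * n.factorial) * t ^ ((n : ℝ) * (1 - κ)) := by
    intro n
    induction n with
    | zero =>
      intro t ht
      simp only [Nat.cast_zero, zero_mul, Real.rpow_zero, pow_zero, Nat.factorial_zero,
        Nat.cast_one, mul_one, one_mul, div_one]
      exact (hM t ht).trans (le_max_left M 0)
    | succ n ih =>
      intro t ht
      have ht0 : 0 < t := ht.1
      set c : ℝ := M' * B ^ n / ((1 - κ) ^ n * n.factorial) with hc
      have hc0 : 0 ≤ c := by positivity
      set e : ℝ := (n : ℝ) * (1 - κ) with he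
      have he0 : 0 ≤ e := by positivity
      have hee : ((n + 1 : ℕ) : ℝ) * (1 - κ) = e - κ + 1 := by push_cast; ring
      have hpos : (0:ℝ) < e - κ + 1 := by linarith
      have htarget0 : 0 ≤ M' * B ^ (n+1) / ((1 - κ) ^ (n+1) * (n+1).factorial) *
          t ^ (((n+1 : ℕ) : ℝ) * (1 - κ)) := by positivity
      by_cases hint : IntervalIntegrable (fun s => l s / s ^ κ) volume 0 t
      · have hrint : IntervalIntegrable (fun s : ℝ => c * s ^ (e - κ)) volume 0 t :=
          (intervalIntegral.intervalIntegrable_rpow' (by linarith)).const_mul c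
        have hmono : (∫ s in (0:ℝ)..t, l s / s ^ κ) ≤ ∫ s in (0:ℝ)..t, c * s ^ (e - κ) := by
          rw [intervalIntegral.integral_of_le ht.1.le, intervalIntegral.integral_of_le ht.1.le]
          refine setIntegral_mono_on
            ((intervalIntegrable_iff_integrableOn_Ioc_of_le ht.1.le).mp hint)
            ((intervalIntegrable_iff_integrableOn_Ioc_of_le ht.1.le).mp hrint)
            measurableSet_Ioc ?_
          intro s hs
          have hs0 : 0 < s := hs.1
          have hsa : s ∈ Set.Ioc (0:ℝ) a := ⟨hs.1, hs.2.trans ht.2⟩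
          have hls : l s ≤ c * s ^ e := ih s hsa
          have hsk : 0 < s ^ κ := Real.rpow_pos_of_pos hs0 κ
          rw [div_le_iff₀ hsk]
          calc l s ≤ c * s ^ e := hls
            _ = c * s ^ (e - κ) * s ^ κ := by
                rw [mul_assoc, ← Real.rpow_add hs0]; ring_nf
        have hval : (∫ s in (0:ℝ)..t, c * s ^ (e - κ)) = c * (t ^ (e - κ + 1) / (e - κ + 1)) := by
          rw [intervalIntegral.integral_const_mul, integral_rpow (Or.inl (by linarith))]
          rw [Real.zero_rpow (by linarith)]
          ring
        have h1 := hineq t ht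
        have h2 : l t ≤ B * (c * (t ^ (e - κ + 1) / (e - κ + 1))) := by
          calc l t ≤ B * ∫ s in (0:ℝ)..t, l s / s ^ κ := h1
            _ ≤ B * (c * (t ^ (e - κ + 1) / (e - κ + 1))) := by
                rw [← hval]; exact mul_le_mul_of_nonneg_left hmono hB
        refine h2.trans (le_of_eq ?_)
        rw [hee]
        have hfac : ((n+1).factorial : ℝ) = (n+1) * n.factorial := by
          rw [Nat.factorial_succ]; push_cast; ring
        have hden : e - κ + 1 = ((n:ℝ) + 1) * (1 - κ) := by rw [he]; ring
        rw [hc, hfac, hden]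
        have hnfac : (n.factorial : ℝ) ≠ 0 := by positivity
        have h1κ' : (1 - κ) ≠ 0 := by linarith
        have hn1 : ((n:ℝ) + 1) ≠ 0 := by positivity
        field_simp
        ring
      · have h1 := hineq t ht
        rw [intervalIntegral.integral_undef hint, mul_zero] at h1
        exact h1.trans htarget0
  intro t ht
  have hbound : ∀ n : ℕ, l t ≤ M' * (B * a ^ (1 - κ) / (1 - κ)) ^ n / n.factorial := by
    intro n
    refine (key n t ht).trans ?_
    have ht' : t ^ ((n : ℝ) * (1 - κ)) ≤ a ^ ((n : ℝ) * (1 - κ)) :=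
      Real.rpow_le_rpow ht.1.le ht.2 (by positivity)
    have haa : a ^ ((n : ℝ) * (1 - κ)) = (a ^ (1 - κ)) ^ n := by
      rw [mul_comm, Real.rpow_mul ha.le, Real.rpow_natCast]
    calc M' * B ^ n / ((1 - κ) ^ n * n.factorial) * t ^ ((n : ℝ) * (1 - κ))
        ≤ M' * B ^ n / ((1 - κ) ^ n * n.factorial) * a ^ ((n : ℝ) * (1 - κ)) := by
          exact mul_le_mul_of_nonneg_left ht' (by positivity)
      _ = M' * (B * a ^ (1 - κ) / (1 - κ)) ^ n / n.factorial := by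
          rw [haa, div_pow, mul_pow]
          have h1 : ((1 - κ) ^ n : ℝ) ≠ 0 := by positivity
          have h2 : (n.factorial : ℝ) ≠ 0 := by positivity
          field_simp
  have htend : Filter.Tendsto (fun n : ℕ => M' * (B * a ^ (1 - κ) / (1 - κ)) ^ n / n.factorial)
      Filter.atTop (nhds 0) := by
    have := FloorSemiring.tendsto_pow_div_factorial_atTop (K := ℝ) (B * a ^ (1 - κ) / (1 - κ))
    have h2 := this.const_mul M'
    simpa [mul_div_assoc] using h2
  have hle : l t ≤ 0 := ge_of_tendsto' htend hbound
  exact le_antisymm hle (hl0 t ht)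


section aux

variable {H : Type*} [NormedAddCommGroup H] [NormedSpace ℝ H]

lemma lsup_bdd (G : ℝ → H →L[ℝ] H) (g : ℕ → H) (hg : ∀ n, ‖g n‖ ≤ 1) (φ : ℕ → ℕ) (t : ℝ) :
    Filter.IsBoundedUnder (· ≤ ·) (Filter.atTop ×ˢ Filter.atTop)
      (fun p : ℕ × ℕ => ‖G t (g (φ p.1)) - G t (g (φ p.2))‖) := by
  refine Filter.isBoundedUnder_of ⟨‖G t‖ + ‖G t‖, fun p => ?_⟩
  calc ‖G t (g (φ p.1)) - G t (g (φ p.2))‖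
      ≤ ‖G t (g (φ p.1))‖ + ‖G t (g (φ p.2))‖ := norm_sub_le _ _
    _ ≤ ‖G t‖ + ‖G t‖ := by
        have h1 : ∀ k, ‖G t (g k)‖ ≤ ‖G t‖ := fun k =>
          ((G t).le_opNorm _).trans (by
            simpa using mul_le_mul_of_nonneg_left (hg k) (norm_nonneg (G t)))
        exact add_le_add (h1 _) (h1 _)

lemma lsup_nonneg (G : ℝ → H →L[ℝ] H) (g : ℕ → H) (hg : ∀ n, ‖g n‖ ≤ 1) (φ : ℕ → ℕ) (t : ℝ) :
    0 ≤ lsup G g φ t :=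
  le_limsup_of_frequently_le (Filter.Frequently.of_forall fun p => norm_nonneg _)
    (lsup_bdd G g hg φ t)

lemma cauchy_of_lsup_eq_zero (G : ℝ → H →L[ℝ] H) (g : ℕ → H) (hg : ∀ n, ‖g n‖ ≤ 1)
    (φ : ℕ → ℕ) (t : ℝ) (h0 : lsup G g φ t = 0) :
    CauchySeq (fun n => G t (g (φ n))) := by
  rw [cauchySeq_iff_tendsto_dist_atTop_0]
  have htend : Filter.Tendsto (fun p : ℕ × ℕ => ‖G t (g (φ p.1)) - G t (g (φ p.2))‖)
      (Filter.atTop ×ˢ Filter.atTop) (𝓝 0) := by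
    rw [Metric.tendsto_nhds]
    intro ε hε
    have hlt : Filter.limsup (fun p : ℕ × ℕ => ‖G t (g (φ p.1)) - G t (g (φ p.2))‖)
        (Filter.atTop ×ˢ Filter.atTop) < ε := by
      rw [show Filter.limsup (fun p : ℕ × ℕ => ‖G t (g (φ p.1)) - G t (g (φ p.2))‖)
        (Filter.atTop ×ˢ Filter.atTop) = lsup G g φ t from rfl, h0]; exact hε
    filter_upwards [eventually_lt_of_limsup_lt hlt (lsup_bdd G g hg φ t)] with p hp
    simpa [Real.dist_eq, abs_of_nonneg (norm_nonneg _)] using hp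
  rw [← Filter.prod_atTop_atTop_eq]
  exact htend.congr fun p => (dist_eq_norm _ _).symm

end aux


/-- Uniform limit of compact operators solving a linear Volterra
equation is compact — abstract version: if for every sequence in the unit
ball there is a subsequence whose double limsup `l` is bounded on `(0,a]` and
satisfies the singular Volterra inequality `l(t) ≤ B ∫₀ᵗ l(s)/s^κ ds` with
`0 ≤ κ < 1`, then `l ≡ 0` on `(0,a]`, the corresponding image sequences are
Cauchy, and each `G_t`, `t ∈ (0,a]`, is a compact operator. -/
theorem stmt19 {H : Type*} [NormedAddCommGroup H] [InnerProductSpace ℝ H]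
    [CompleteSpace H]
    (a B κ : ℝ) (ha : 0 < a) (hB : 0 ≤ B) (hκ0 : 0 ≤ κ) (hκ1 : κ < 1)
    (G : ℝ → H →L[ℝ] H)
    (hyp : ∀ g : ℕ → H, (∀ n, ‖g n‖ ≤ 1) →
      ∃ φ : ℕ → ℕ, StrictMono φ ∧
        (∀ t ∈ Set.Ioc (0:ℝ) a,
          lsup G g φ t ≤ B * ∫ s in (0:ℝ)..t, lsup G g φ s / s ^ κ) ∧
        (∃ M : ℝ, ∀ t ∈ Set.Ioc (0:ℝ) a, lsup G g φ t ≤ M)) :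
    (∀ g : ℕ → H, (∀ n, ‖g n‖ ≤ 1) →
      ∃ φ : ℕ → ℕ, StrictMono φ ∧
        ∀ t ∈ Set.Ioc (0:ℝ) a,
          lsup G g φ t = 0 ∧ CauchySeq (fun n => G t (g (φ n)))) ∧
    (∀ t ∈ Set.Ioc (0:ℝ) a, IsCompactOperator (G t)) := by
  have main1 : ∀ g : ℕ → H, (∀ n, ‖g n‖ ≤ 1) →
      ∃ φ : ℕ → ℕ, StrictMono φ ∧
        ∀ t ∈ Set.Ioc (0:ℝ) a,
          lsup G g φ t = 0 ∧ CauchySeq (fun n => G t (g (φ n))) := by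
    intro g hg
    obtain ⟨φ, hφ, hineq, M, hM⟩ := hyp g hg
    have hzero : ∀ t ∈ Set.Ioc (0:ℝ) a, lsup G g φ t = 0 :=
      gronwall19 ha hB hκ0 hκ1 (fun t _ => lsup_nonneg G g hg φ t) hM hineq
    exact ⟨φ, hφ, fun t ht =>
      ⟨hzero t ht, cauchy_of_lsup_eq_zero G g hg φ t (hzero t ht)⟩⟩
  refine ⟨main1, fun t ht => ?_⟩
  have hiff := isCompactOperator_iff_isCompact_closure_image_closedBall
    (𝕜₁ := ℝ) ((G t : H →ₗ[ℝ] H)) one_pos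
  have hcomp : IsCompact (closure (⇑(G t : H →ₗ[ℝ] H) '' Metric.closedBall 0 1)) := by
    apply IsSeqCompact.isCompact
    intro x hx
    have hex : ∀ n : ℕ, ∃ w ∈ (⇑(G t : H →ₗ[ℝ] H) '' Metric.closedBall (0:H) 1),
        dist (x n) w < 1 / (n + 1) := fun n =>
      Metric.mem_closure_iff.mp (hx n) _ (by positivity)
    choose y hyS hyd using hex
    have hex2 : ∀ n : ℕ, ∃ v : H, ‖v‖ ≤ 1 ∧ G t v = y n := by
      intro n
      obtain ⟨v, hv, hv2⟩ := hyS n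
      exact ⟨v, mem_closedBall_zero_iff.mp hv, hv2⟩
    choose g hg hgy using hex2
    obtain ⟨φ, hφ, hprop⟩ := main1 g hg
    obtain ⟨z, hz⟩ := cauchySeq_tendsto_of_complete ((hprop t ht).2)
    have hyz : Filter.Tendsto (fun n => y (φ n)) Filter.atTop (𝓝 z) := by
      simpa [hgy] using hz
    have hzmem : z ∈ closure (⇑(G t : H →ₗ[ℝ] H) '' Metric.closedBall (0:H) 1) :=
      mem_closure_of_tendsto hyz (Filter.Eventually.of_forall fun n => hyS (φ n))
    refine ⟨z, hzmem, φ, hφ, ?_⟩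
    rw [tendsto_iff_dist_tendsto_zero]
    have hb : ∀ n : ℕ, dist ((x ∘ φ) n) z ≤ 1 / (n + 1) + dist (y (φ n)) z := by
      intro n
      calc dist (x (φ n)) z ≤ dist (x (φ n)) (y (φ n)) + dist (y (φ n)) z :=
            dist_triangle _ _ _
        _ ≤ 1 / (n + 1) + dist (y (φ n)) z := by
            refine add_le_add (le_trans (hyd (φ n)).le ?_) le_rfl
            apply one_div_le_one_div_of_le (by positivity)
            have hn : (n : ℝ) ≤ (φ n : ℝ) := Nat.cast_le.mpr hφ.le_apply
            linarith
    have hlim : Filter.Tendsto (fun n : ℕ => 1 / ((n : ℝ) + 1) + dist (y (φ n)) z)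
        Filter.atTop (𝓝 0) := by
      have h1 := tendsto_one_div_add_atTop_nhds_zero_nat (𝕜 := ℝ)
      have h2 : Filter.Tendsto (fun n => dist (y (φ n)) z) Filter.atTop (𝓝 0) :=
        tendsto_iff_dist_tendsto_zero.mp hyz
      simpa using h1.add h2
    exact squeeze_zero (fun n => dist_nonneg) hb hlim
  exact hiff.mpr hcomp
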